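/- Let N ≥ 2 be an integer and let ρ_N be the unscaled GOE eigenvalue density. Then ρ_N satisfies, for every real x, the fifth order linear ordinary differential equation −4·ρ_N^{(5)}(x) + 5·(x² − 4N + 2)·ρ_N'''(x) − 6x·ρ_N''(x) + (−x⁴ + (8N−4)·x² − 16N² + 16N + 2)·ρ_N'(x) + x·(x² − 4N + 2)·ρ_N(x) = 0. -/

import Mathlib

open Nat MeasureTheory

/-- The orthonormal Hermite functions' polynomial part:
`p_n(x) = He_n(x)/√(√(2π)·n!)`, orthonormal for the weight `e^{-x²/2}` on `ℝ`. -/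
noncomputable def pOrtho (n : ℕ) (x : ℝ) : ℝ :=
  Polynomial.aeval x (Polynomial.hermite n) /
    Real.sqrt (Real.sqrt (2 * Real.pi) * (n ! : ℝ))

/-- `q_n(x) = ∫_{−∞}^{x} e^{−t²/4} p_n(t) dt`. -/
noncomputable def qFun (n : ℕ) (x : ℝ) : ℝ :=
  ∫ t in Set.Iic x, Real.exp (-t ^ 2 / 4) * pOrtho n t

/-- `D_n = π^{1/4} 2^{3/4} √((n−1)!!/n!!)`. -/
noncomputable def Dconst (n : ℕ) : ℝ :=
  Real.pi ^ ((1 : ℝ) / 4) * (2 : ℝ) ^ ((3 : ℝ) / 4) *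
    Real.sqrt ((Nat.doubleFactorial (n - 1) : ℝ) / (Nat.doubleFactorial n : ℝ))

/-- `A_N = −(1/4)D_N` for even `N`, and `A_N = N^{−1/2} D_{N−1}^{−1}` for odd `N`. -/
noncomputable def Aconst (N : ℕ) : ℝ :=
  if N % 2 = 0 then -(1 / 4) * Dconst N else (Real.sqrt N)⁻¹ * (Dconst (N - 1))⁻¹

/-- The (unscaled) GOE eigenvalue density
`ρ_N(x) = √N·(e^{−x²/2}(p_N'p_{N−1} − p_N p_{N−1}') + e^{−x²/4}((1/2)q_N + A_N)p_{N−1})`. -/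
noncomputable def goeDensity (N : ℕ) (x : ℝ) : ℝ :=
  Real.sqrt N *
    (Real.exp (-x ^ 2 / 2) *
        (deriv (pOrtho N) x * pOrtho (N - 1) x - pOrtho N x * deriv (pOrtho (N - 1)) x) +
      Real.exp (-x ^ 2 / 4) * ((1 / 2) * qFun N x + Aconst N) * pOrtho (N - 1) x)

namespace GOE

open Polynomial

theorem derivative_hermite (n : ℕ) :
    derivative (hermite (n + 1)) = ((n : Polynomial ℤ) + 1) * hermite n := by
  induction n with
  | zero => simp [hermite_one, hermite_zero]
  | succ n ih =>
      rw [hermite_succ (n + 1), derivative_sub, derivative_mul, derivative_X, ih,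
        derivative_mul]
      simp only [derivative_add, derivative_natCast, derivative_one, add_zero, zero_add,
        zero_mul]
      push_cast
      linear_combination (-(n : Polynomial ℤ) - 1) * (hermite_succ n)

noncomputable def cst (n : ℕ) : ℝ := Real.sqrt (Real.sqrt (2 * Real.pi) * (n ! : ℝ))

theorem cst_pos (n : ℕ) : 0 < cst n := by
  have h2 : (0:ℝ) < (n ! : ℝ) := by exact_mod_cast n.factorial_pos
  have hpi : (0:ℝ) < Real.pi := Real.pi_pos
  exact Real.sqrt_pos.mpr (by positivity)

theorem sqrtN_pos {N : ℕ} (hN : 2 ≤ N) : 0 < Real.sqrt (N : ℝ) :=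
  Real.sqrt_pos.mpr (by exact_mod_cast (by omega : 0 < N))

theorem cst_eq {N : ℕ} (hN : 2 ≤ N) : cst N = Real.sqrt (N : ℝ) * cst (N - 1) := by
  have h : N * (N - 1)! = N ! := Nat.mul_factorial_pred (by omega)
  rw [cst, cst, ← h]
  push_cast
  rw [show Real.sqrt (2 * Real.pi) * ((N : ℝ) * ((N-1)! : ℝ)) =
      (N : ℝ) * (Real.sqrt (2 * Real.pi) * ((N-1)! : ℝ)) by ring,
    Real.sqrt_mul (by positivity)]

theorem pOrtho_def (n : ℕ) : pOrtho n = fun x => (aeval x (hermite n) : ℝ) / cst n := rfl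

theorem aeval_hasDerivAt (p : Polynomial ℤ) (x : ℝ) :
    HasDerivAt (fun y : ℝ => (aeval y p : ℝ)) (aeval x (derivative p)) x := by
  have h := (p.map (algebraMap ℤ ℝ)).hasDerivAt x
  simp only [derivative_map] at h
  simpa only [aeval_def, ← eval_map] using h

theorem hasDerivAt_pOrtho_top {N : ℕ} (hN : 2 ≤ N) (x : ℝ) :
    HasDerivAt (pOrtho N) (Real.sqrt (N : ℝ) * pOrtho (N - 1) x) x := by
  rw [pOrtho_def]
  have hval : Real.sqrt (N : ℝ) * pOrtho (N - 1) x = (aeval x (derivative (hermite N)) : ℝ) / cst N := by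
    obtain ⟨m, rfl⟩ : ∃ m, N = m + 1 := ⟨N - 1, by omega⟩
    rw [derivative_hermite m, pOrtho_def, cst_eq hN]
    simp only [Nat.add_sub_cancel, map_mul, map_add, aeval_natCast, map_one]
    have hc : cst m ≠ 0 := (cst_pos m).ne'
    have hs : Real.sqrt ((m+1 : ℕ) : ℝ) ≠ 0 := (sqrtN_pos hN).ne'
    have hss : Real.sqrt ((m+1 : ℕ) : ℝ) * Real.sqrt ((m+1 : ℕ) : ℝ) = ((m+1 : ℕ) : ℝ) :=
      Real.mul_self_sqrt (by positivity)
    field_simp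
    push_cast at hss ⊢
    linear_combination (aeval x (hermite m) : ℝ) * hss
  rw [hval]
  exact (aeval_hasDerivAt (hermite N) x).div_const (cst N)

theorem hasDerivAt_pOrtho_bot {N : ℕ} (hN : 2 ≤ N) (x : ℝ) :
    HasDerivAt (pOrtho (N - 1)) (x * pOrtho (N - 1) x - Real.sqrt (N : ℝ) * pOrtho N x) x := by
  have hder : derivative (hermite (N - 1)) = X * hermite (N - 1) - hermite N := by
    have h := hermite_succ (N - 1)
    rw [show N - 1 + 1 = N by omega] at h
    linear_combination h
  have hval : x * pOrtho (N - 1) x - Real.sqrt (N : ℝ) * pOrtho N x =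
      (aeval x (derivative (hermite (N - 1))) : ℝ) / cst (N - 1) := by
    rw [hder, pOrtho_def, pOrtho_def, cst_eq hN]
    simp only [map_sub, map_mul, aeval_X]
    have hc : cst (N - 1) ≠ 0 := (cst_pos _).ne'
    have hs : Real.sqrt (N : ℝ) ≠ 0 := (sqrtN_pos hN).ne'
    have hss : Real.sqrt (N : ℝ) * Real.sqrt (N : ℝ) = (N : ℝ) :=
      Real.mul_self_sqrt (by positivity)
    field_simp
  have H : HasDerivAt (pOrtho (N - 1))
      ((aeval x (derivative (hermite (N - 1))) : ℝ) / cst (N - 1)) x := by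
    rw [pOrtho_def]
    exact (aeval_hasDerivAt _ x).div_const _
  rw [hval]
  exact H

noncomputable def aF (N : ℕ) (x : ℝ) : ℝ := Real.exp (-x ^ 2 / 4) * pOrtho N x
noncomputable def bF (N : ℕ) (x : ℝ) : ℝ := Real.exp (-x ^ 2 / 4) * pOrtho (N - 1) x
noncomputable def QF (N : ℕ) (x : ℝ) : ℝ := 1 / 2 * qFun N x + Aconst N

theorem expPart_hasDerivAt (x : ℝ) :
    HasDerivAt (fun y : ℝ => Real.exp (-y ^ 2 / 4)) (Real.exp (-x ^ 2 / 4) * (-x / 2)) x := by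
  have h2 : HasDerivAt (fun y : ℝ => -y ^ 2 / 4) (-x / 2) x := by
    have h := ((hasDerivAt_pow 2 x).neg).div_const 4
    refine h.congr_deriv ?_
    push_cast
    ring
  exact h2.exp

theorem aF_hasDerivAt {N : ℕ} (hN : 2 ≤ N) (x : ℝ) :
    HasDerivAt (aF N) (Real.sqrt (N : ℝ) * bF N x - x / 2 * aF N x) x := by
  have h := (expPart_hasDerivAt x).mul (hasDerivAt_pOrtho_top hN x)
  have hfun : aF N = fun y => Real.exp (-y ^ 2 / 4) * pOrtho N y := rfl
  rw [show Real.sqrt (N : ℝ) * bF N x - x / 2 * aF N x =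
      Real.exp (-x ^ 2 / 4) * (-x / 2) * pOrtho N x +
        Real.exp (-x ^ 2 / 4) * (Real.sqrt (N : ℝ) * pOrtho (N - 1) x) from by
    simp only [aF, bF]; ring, hfun]
  exact h

theorem bF_hasDerivAt {N : ℕ} (hN : 2 ≤ N) (x : ℝ) :
    HasDerivAt (bF N) (x / 2 * bF N x - Real.sqrt (N : ℝ) * aF N x) x := by
  have h := (expPart_hasDerivAt x).mul (hasDerivAt_pOrtho_bot hN x)
  have hfun : bF N = fun y => Real.exp (-y ^ 2 / 4) * pOrtho (N - 1) y := rfl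
  rw [show x / 2 * bF N x - Real.sqrt (N : ℝ) * aF N x =
      Real.exp (-x ^ 2 / 4) * (-x / 2) * pOrtho (N - 1) x +
        Real.exp (-x ^ 2 / 4) * (x * pOrtho (N - 1) x - Real.sqrt (N : ℝ) * pOrtho N x) from by
    simp only [aF, bF]; ring, hfun]
  exact h

theorem integrable_pow_gauss (k : ℕ) :
    Integrable (fun t : ℝ => t ^ k * Real.exp (-(1 / 4) * t ^ 2)) := by
  have h := integrable_rpow_mul_exp_neg_mul_sq (by norm_num : (0:ℝ) < 1/4)
    (s := (k : ℝ)) (lt_of_lt_of_le neg_one_lt_zero (Nat.cast_nonneg k))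
  simpa [Real.rpow_natCast] using h

theorem integrable_gauss_poly (p : Polynomial ℤ) :
    Integrable (fun t : ℝ => (aeval t p : ℝ) * Real.exp (-(1 / 4) * t ^ 2)) := by
  induction p using Polynomial.induction_on' with
  | add p q hp hq => simpa [add_mul, Pi.add_def] using hp.add hq
  | monomial n a =>
      have h := (integrable_pow_gauss n).const_mul ((a : ℝ))
      refine h.congr (Filter.Eventually.of_forall fun t => ?_)
      simp only [aeval_monomial, algebraMap_int_eq, eq_intCast]
      ring

theorem integrable_aF (N : ℕ) :
    Integrable (fun t : ℝ => Real.exp (-t ^ 2 / 4) * pOrtho N t) := by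
  have h := (integrable_gauss_poly (hermite N)).const_mul (cst N)⁻¹
  refine h.congr (Filter.Eventually.of_forall fun t => ?_)
  simp only [pOrtho_def, cst]
  rw [show (-t ^ 2 / 4 : ℝ) = -(1 / 4) * t ^ 2 by ring]
  ring

theorem qFun_hasDerivAt (N : ℕ) (x : ℝ) :
    HasDerivAt (qFun N) (Real.exp (-x ^ 2 / 4) * pOrtho N x) x := by
  have hint := integrable_aF N
  have hcont : Continuous fun t : ℝ => Real.exp (-t ^ 2 / 4) * pOrtho N t := by
    apply Continuous.mul
    · exact Real.continuous_exp.comp (by fun_prop)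
    · rw [pOrtho_def]
      exact ((hermite N).continuous_aeval).div_const _
  have hq : qFun N = fun u => qFun N 0 +
      ∫ t in (0:ℝ)..u, Real.exp (-t ^ 2 / 4) * pOrtho N t := by
    funext u
    have h := intervalIntegral.integral_Iic_sub_Iic (hint.integrableOn) (hint.integrableOn) (μ := volume)
      (a := 0) (b := u)
    simp only [qFun]
    linarith [h]
  rw [hq]
  exact ((intervalIntegral.integral_hasDerivAt_right (hint.intervalIntegrable)
    hcont.aestronglyMeasurable.stronglyMeasurableAtFilter hcont.continuousAt).const_add _)

theorem QF_hasDerivAt (N : ℕ) (x : ℝ) :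
    HasDerivAt (QF N) (1 / 2 * aF N x) x :=
  ((qFun_hasDerivAt N x).const_mul (1 / 2 : ℝ)).add_const (Aconst N)

noncomputable def g0 (N : ℕ) (x : ℝ) : ℝ :=
  Real.sqrt (N : ℝ) *
    (((1 : ℝ) * Real.sqrt (N : ℝ) ^ 1) * x ^ 0 * (aF N x * aF N x) +
      ((-1 : ℝ) * Real.sqrt (N : ℝ) ^ 0) * x ^ 1 * (aF N x * bF N x) +
      ((1 : ℝ) * Real.sqrt (N : ℝ) ^ 0) * x ^ 0 * (bF N x * QF N x) +
      ((1 : ℝ) * Real.sqrt (N : ℝ) ^ 1) * x ^ 0 * (bF N x * bF N x))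

noncomputable def g1 (N : ℕ) (x : ℝ) : ℝ :=
  Real.sqrt (N : ℝ) *
    (((-1 : ℝ) * Real.sqrt (N : ℝ) ^ 1) * x ^ 0 * (aF N x * QF N x) +
      ((-1/2 : ℝ) * Real.sqrt (N : ℝ) ^ 0) * x ^ 0 * (aF N x * bF N x) +
      ((1/2 : ℝ) * Real.sqrt (N : ℝ) ^ 0) * x ^ 1 * (bF N x * QF N x))

noncomputable def g2 (N : ℕ) (x : ℝ) : ℝ :=
  Real.sqrt (N : ℝ) *
    (((1/4 : ℝ) * Real.sqrt (N : ℝ) ^ 0) * x ^ 1 * (aF N x * bF N x) +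
      ((1/2 : ℝ) * Real.sqrt (N : ℝ) ^ 0) * x ^ 0 * (bF N x * QF N x) +
      ((-1 : ℝ) * Real.sqrt (N : ℝ) ^ 2) * x ^ 0 * (bF N x * QF N x) +
      ((1/4 : ℝ) * Real.sqrt (N : ℝ) ^ 0) * x ^ 2 * (bF N x * QF N x) +
      ((-1/2 : ℝ) * Real.sqrt (N : ℝ) ^ 1) * x ^ 0 * (bF N x * bF N x))

noncomputable def g3 (N : ℕ) (x : ℝ) : ℝ :=
  Real.sqrt (N : ℝ) *
    (((-1/2 : ℝ) * Real.sqrt (N : ℝ) ^ 1) * x ^ 0 * (aF N x * QF N x) +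
      ((1 : ℝ) * Real.sqrt (N : ℝ) ^ 3) * x ^ 0 * (aF N x * QF N x) +
      ((-1/4 : ℝ) * Real.sqrt (N : ℝ) ^ 1) * x ^ 2 * (aF N x * QF N x) +
      ((-1/4 : ℝ) * Real.sqrt (N : ℝ) ^ 1) * x ^ 1 * (aF N x * aF N x) +
      ((1/2 : ℝ) * Real.sqrt (N : ℝ) ^ 0) * x ^ 0 * (aF N x * bF N x) +
      ((1/2 : ℝ) * Real.sqrt (N : ℝ) ^ 2) * x ^ 0 * (aF N x * bF N x) +
      ((1/8 : ℝ) * Real.sqrt (N : ℝ) ^ 0) * x ^ 2 * (aF N x * bF N x) +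
      ((3/4 : ℝ) * Real.sqrt (N : ℝ) ^ 0) * x ^ 1 * (bF N x * QF N x) +
      ((-1/2 : ℝ) * Real.sqrt (N : ℝ) ^ 2) * x ^ 1 * (bF N x * QF N x) +
      ((1/8 : ℝ) * Real.sqrt (N : ℝ) ^ 0) * x ^ 3 * (bF N x * QF N x) +
      ((-1/4 : ℝ) * Real.sqrt (N : ℝ) ^ 1) * x ^ 1 * (bF N x * bF N x))

noncomputable def g4 (N : ℕ) (x : ℝ) : ℝ :=
  Real.sqrt (N : ℝ) *
    (((-1 : ℝ) * Real.sqrt (N : ℝ) ^ 1) * x ^ 1 * (aF N x * QF N x) +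
      ((-1 : ℝ) * Real.sqrt (N : ℝ) ^ 1) * x ^ 0 * (aF N x * aF N x) +
      ((5/8 : ℝ) * Real.sqrt (N : ℝ) ^ 0) * x ^ 1 * (aF N x * bF N x) +
      ((-1/4 : ℝ) * Real.sqrt (N : ℝ) ^ 2) * x ^ 1 * (aF N x * bF N x) +
      ((1/16 : ℝ) * Real.sqrt (N : ℝ) ^ 0) * x ^ 3 * (aF N x * bF N x) +
      ((3/4 : ℝ) * Real.sqrt (N : ℝ) ^ 0) * x ^ 0 * (bF N x * QF N x) +
      ((-1 : ℝ) * Real.sqrt (N : ℝ) ^ 2) * x ^ 0 * (bF N x * QF N x) +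
      ((1 : ℝ) * Real.sqrt (N : ℝ) ^ 4) * x ^ 0 * (bF N x * QF N x) +
      ((3/4 : ℝ) * Real.sqrt (N : ℝ) ^ 0) * x ^ 2 * (bF N x * QF N x) +
      ((-1/2 : ℝ) * Real.sqrt (N : ℝ) ^ 2) * x ^ 2 * (bF N x * QF N x) +
      ((1/16 : ℝ) * Real.sqrt (N : ℝ) ^ 0) * x ^ 4 * (bF N x * QF N x) +
      ((1/4 : ℝ) * Real.sqrt (N : ℝ) ^ 1) * x ^ 0 * (bF N x * bF N x) +
      ((1/2 : ℝ) * Real.sqrt (N : ℝ) ^ 3) * x ^ 0 * (bF N x * bF N x) +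
      ((-1/8 : ℝ) * Real.sqrt (N : ℝ) ^ 1) * x ^ 2 * (bF N x * bF N x))

noncomputable def g5 (N : ℕ) (x : ℝ) : ℝ :=
  Real.sqrt (N : ℝ) *
    (((-7/4 : ℝ) * Real.sqrt (N : ℝ) ^ 1) * x ^ 0 * (aF N x * QF N x) +
      ((1 : ℝ) * Real.sqrt (N : ℝ) ^ 3) * x ^ 0 * (aF N x * QF N x) +
      ((-1 : ℝ) * Real.sqrt (N : ℝ) ^ 5) * x ^ 0 * (aF N x * QF N x) +
      ((-1/4 : ℝ) * Real.sqrt (N : ℝ) ^ 1) * x ^ 2 * (aF N x * QF N x) +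
      ((1/2 : ℝ) * Real.sqrt (N : ℝ) ^ 3) * x ^ 2 * (aF N x * QF N x) +
      ((-1/16 : ℝ) * Real.sqrt (N : ℝ) ^ 1) * x ^ 4 * (aF N x * QF N x) +
      ((-1/8 : ℝ) * Real.sqrt (N : ℝ) ^ 1) * x ^ 1 * (aF N x * aF N x) +
      ((1/4 : ℝ) * Real.sqrt (N : ℝ) ^ 3) * x ^ 1 * (aF N x * aF N x) +
      ((-1/16 : ℝ) * Real.sqrt (N : ℝ) ^ 1) * x ^ 3 * (aF N x * aF N x) +
      ((1 : ℝ) * Real.sqrt (N : ℝ) ^ 0) * x ^ 0 * (aF N x * bF N x) +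
      ((-13/4 : ℝ) * Real.sqrt (N : ℝ) ^ 2) * x ^ 0 * (aF N x * bF N x) +
      ((-1/2 : ℝ) * Real.sqrt (N : ℝ) ^ 4) * x ^ 0 * (aF N x * bF N x) +
      ((9/16 : ℝ) * Real.sqrt (N : ℝ) ^ 0) * x ^ 2 * (aF N x * bF N x) +
      ((1/32 : ℝ) * Real.sqrt (N : ℝ) ^ 0) * x ^ 4 * (aF N x * bF N x) +
      ((15/8 : ℝ) * Real.sqrt (N : ℝ) ^ 0) * x ^ 1 * (bF N x * QF N x) +
      ((-5/2 : ℝ) * Real.sqrt (N : ℝ) ^ 2) * x ^ 1 * (bF N x * QF N x) +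
      ((1/2 : ℝ) * Real.sqrt (N : ℝ) ^ 4) * x ^ 1 * (bF N x * QF N x) +
      ((5/8 : ℝ) * Real.sqrt (N : ℝ) ^ 0) * x ^ 3 * (bF N x * QF N x) +
      ((-1/4 : ℝ) * Real.sqrt (N : ℝ) ^ 2) * x ^ 3 * (bF N x * QF N x) +
      ((1/32 : ℝ) * Real.sqrt (N : ℝ) ^ 0) * x ^ 5 * (bF N x * QF N x) +
      ((5/8 : ℝ) * Real.sqrt (N : ℝ) ^ 1) * x ^ 1 * (bF N x * bF N x) +
      ((1/4 : ℝ) * Real.sqrt (N : ℝ) ^ 3) * x ^ 1 * (bF N x * bF N x) +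
      ((-1/16 : ℝ) * Real.sqrt (N : ℝ) ^ 1) * x ^ 3 * (bF N x * bF N x))

theorem gstep0 {N : ℕ} (hN : 2 ≤ N) (x : ℝ) :
    HasDerivAt (g0 N) (g1 N x) x := by
  have ha := aF_hasDerivAt hN x
  have hb := bF_hasDerivAt hN x
  have hQ := QF_hasDerivAt N x
  have H := ((((((hasDerivAt_pow 0 x).const_mul ((1 : ℝ) * Real.sqrt (N : ℝ) ^ 1)).mul (ha.mul ha)).add
    (((hasDerivAt_pow 1 x).const_mul ((-1 : ℝ) * Real.sqrt (N : ℝ) ^ 0)).mul (ha.mul hb))).add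
    (((hasDerivAt_pow 0 x).const_mul ((1 : ℝ) * Real.sqrt (N : ℝ) ^ 0)).mul (hb.mul hQ))).add
    (((hasDerivAt_pow 0 x).const_mul ((1 : ℝ) * Real.sqrt (N : ℝ) ^ 1)).mul (hb.mul hb))).const_mul (Real.sqrt (N : ℝ))
  have hfun : g0 N = fun x => Real.sqrt (N : ℝ) *
    (((1 : ℝ) * Real.sqrt (N : ℝ) ^ 1) * x ^ 0 * (aF N x * aF N x) + ((-1 : ℝ) * Real.sqrt (N : ℝ) ^ 0) * x ^ 1 * (aF N x * bF N x) + ((1 : ℝ) * Real.sqrt (N : ℝ) ^ 0) * x ^ 0 * (bF N x * QF N x) + ((1 : ℝ) * Real.sqrt (N : ℝ) ^ 1) * x ^ 0 * (bF N x * bF N x)) := rfl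
  rw [hfun]
  refine H.congr_deriv ?_
  simp only [g1, Pi.mul_apply]
  push_cast
  ring

theorem gstep1 {N : ℕ} (hN : 2 ≤ N) (x : ℝ) :
    HasDerivAt (g1 N) (g2 N x) x := by
  have ha := aF_hasDerivAt hN x
  have hb := bF_hasDerivAt hN x
  have hQ := QF_hasDerivAt N x
  have H := (((((hasDerivAt_pow 0 x).const_mul ((-1 : ℝ) * Real.sqrt (N : ℝ) ^ 1)).mul (ha.mul hQ)).add
    (((hasDerivAt_pow 0 x).const_mul ((-1/2 : ℝ) * Real.sqrt (N : ℝ) ^ 0)).mul (ha.mul hb))).add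
    (((hasDerivAt_pow 1 x).const_mul ((1/2 : ℝ) * Real.sqrt (N : ℝ) ^ 0)).mul (hb.mul hQ))).const_mul (Real.sqrt (N : ℝ))
  have hfun : g1 N = fun x => Real.sqrt (N : ℝ) *
    (((-1 : ℝ) * Real.sqrt (N : ℝ) ^ 1) * x ^ 0 * (aF N x * QF N x) + ((-1/2 : ℝ) * Real.sqrt (N : ℝ) ^ 0) * x ^ 0 * (aF N x * bF N x) + ((1/2 : ℝ) * Real.sqrt (N : ℝ) ^ 0) * x ^ 1 * (bF N x * QF N x)) := rfl
  rw [hfun]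
  refine H.congr_deriv ?_
  simp only [g2, Pi.mul_apply]
  push_cast
  ring

theorem gstep2 {N : ℕ} (hN : 2 ≤ N) (x : ℝ) :
    HasDerivAt (g2 N) (g3 N x) x := by
  have ha := aF_hasDerivAt hN x
  have hb := bF_hasDerivAt hN x
  have hQ := QF_hasDerivAt N x
  have H := (((((((hasDerivAt_pow 1 x).const_mul ((1/4 : ℝ) * Real.sqrt (N : ℝ) ^ 0)).mul (ha.mul hb)).add
    (((hasDerivAt_pow 0 x).const_mul ((1/2 : ℝ) * Real.sqrt (N : ℝ) ^ 0)).mul (hb.mul hQ))).add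
    (((hasDerivAt_pow 0 x).const_mul ((-1 : ℝ) * Real.sqrt (N : ℝ) ^ 2)).mul (hb.mul hQ))).add
    (((hasDerivAt_pow 2 x).const_mul ((1/4 : ℝ) * Real.sqrt (N : ℝ) ^ 0)).mul (hb.mul hQ))).add
    (((hasDerivAt_pow 0 x).const_mul ((-1/2 : ℝ) * Real.sqrt (N : ℝ) ^ 1)).mul (hb.mul hb))).const_mul (Real.sqrt (N : ℝ))
  have hfun : g2 N = fun x => Real.sqrt (N : ℝ) *
    (((1/4 : ℝ) * Real.sqrt (N : ℝ) ^ 0) * x ^ 1 * (aF N x * bF N x) + ((1/2 : ℝ) * Real.sqrt (N : ℝ) ^ 0) * x ^ 0 * (bF N x * QF N x) + ((-1 : ℝ) * Real.sqrt (N : ℝ) ^ 2) * x ^ 0 * (bF N x * QF N x) + ((1/4 : ℝ) * Real.sqrt (N : ℝ) ^ 0) * x ^ 2 * (bF N x * QF N x) + ((-1/2 : ℝ) * Real.sqrt (N : ℝ) ^ 1) * x ^ 0 * (bF N x * bF N x)) := rfl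
  rw [hfun]
  refine H.congr_deriv ?_
  simp only [g3, Pi.mul_apply]
  push_cast
  ring

theorem gstep3 {N : ℕ} (hN : 2 ≤ N) (x : ℝ) :
    HasDerivAt (g3 N) (g4 N x) x := by
  have ha := aF_hasDerivAt hN x
  have hb := bF_hasDerivAt hN x
  have hQ := QF_hasDerivAt N x
  have H := (((((((((((((hasDerivAt_pow 0 x).const_mul ((-1/2 : ℝ) * Real.sqrt (N : ℝ) ^ 1)).mul (ha.mul hQ)).add
    (((hasDerivAt_pow 0 x).const_mul ((1 : ℝ) * Real.sqrt (N : ℝ) ^ 3)).mul (ha.mul hQ))).add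
    (((hasDerivAt_pow 2 x).const_mul ((-1/4 : ℝ) * Real.sqrt (N : ℝ) ^ 1)).mul (ha.mul hQ))).add
    (((hasDerivAt_pow 1 x).const_mul ((-1/4 : ℝ) * Real.sqrt (N : ℝ) ^ 1)).mul (ha.mul ha))).add
    (((hasDerivAt_pow 0 x).const_mul ((1/2 : ℝ) * Real.sqrt (N : ℝ) ^ 0)).mul (ha.mul hb))).add
    (((hasDerivAt_pow 0 x).const_mul ((1/2 : ℝ) * Real.sqrt (N : ℝ) ^ 2)).mul (ha.mul hb))).add
    (((hasDerivAt_pow 2 x).const_mul ((1/8 : ℝ) * Real.sqrt (N : ℝ) ^ 0)).mul (ha.mul hb))).add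
    (((hasDerivAt_pow 1 x).const_mul ((3/4 : ℝ) * Real.sqrt (N : ℝ) ^ 0)).mul (hb.mul hQ))).add
    (((hasDerivAt_pow 1 x).const_mul ((-1/2 : ℝ) * Real.sqrt (N : ℝ) ^ 2)).mul (hb.mul hQ))).add
    (((hasDerivAt_pow 3 x).const_mul ((1/8 : ℝ) * Real.sqrt (N : ℝ) ^ 0)).mul (hb.mul hQ))).add
    (((hasDerivAt_pow 1 x).const_mul ((-1/4 : ℝ) * Real.sqrt (N : ℝ) ^ 1)).mul (hb.mul hb))).const_mul (Real.sqrt (N : ℝ))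
  have hfun : g3 N = fun x => Real.sqrt (N : ℝ) *
    (((-1/2 : ℝ) * Real.sqrt (N : ℝ) ^ 1) * x ^ 0 * (aF N x * QF N x) + ((1 : ℝ) * Real.sqrt (N : ℝ) ^ 3) * x ^ 0 * (aF N x * QF N x) + ((-1/4 : ℝ) * Real.sqrt (N : ℝ) ^ 1) * x ^ 2 * (aF N x * QF N x) + ((-1/4 : ℝ) * Real.sqrt (N : ℝ) ^ 1) * x ^ 1 * (aF N x * aF N x) + ((1/2 : ℝ) * Real.sqrt (N : ℝ) ^ 0) * x ^ 0 * (aF N x * bF N x) + ((1/2 : ℝ) * Real.sqrt (N : ℝ) ^ 2) * x ^ 0 * (aF N x * bF N x) + ((1/8 : ℝ) * Real.sqrt (N : ℝ) ^ 0) * x ^ 2 * (aF N x * bF N x) + ((3/4 : ℝ) * Real.sqrt (N : ℝ) ^ 0) * x ^ 1 * (bF N x * QF N x) + ((-1/2 : ℝ) * Real.sqrt (N : ℝ) ^ 2) * x ^ 1 * (bF N x * QF N x) + ((1/8 : ℝ) * Real.sqrt (N : ℝ) ^ 0) * x ^ 3 * (bF N x * QF N x) + ((-1/4 : ℝ) *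 Real.sqrt (N : ℝ) ^ 1) * x ^ 1 * (bF N x * bF N x)) := rfl
  rw [hfun]
  refine H.congr_deriv ?_
  simp only [g4, Pi.mul_apply]
  push_cast
  ring

theorem gstep4 {N : ℕ} (hN : 2 ≤ N) (x : ℝ) :
    HasDerivAt (g4 N) (g5 N x) x := by
  have ha := aF_hasDerivAt hN x
  have hb := bF_hasDerivAt hN x
  have hQ := QF_hasDerivAt N x
  have H := ((((((((((((((((hasDerivAt_pow 1 x).const_mul ((-1 : ℝ) * Real.sqrt (N : ℝ) ^ 1)).mul (ha.mul hQ)).add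
    (((hasDerivAt_pow 0 x).const_mul ((-1 : ℝ) * Real.sqrt (N : ℝ) ^ 1)).mul (ha.mul ha))).add
    (((hasDerivAt_pow 1 x).const_mul ((5/8 : ℝ) * Real.sqrt (N : ℝ) ^ 0)).mul (ha.mul hb))).add
    (((hasDerivAt_pow 1 x).const_mul ((-1/4 : ℝ) * Real.sqrt (N : ℝ) ^ 2)).mul (ha.mul hb))).add
    (((hasDerivAt_pow 3 x).const_mul ((1/16 : ℝ) * Real.sqrt (N : ℝ) ^ 0)).mul (ha.mul hb))).add
    (((hasDerivAt_pow 0 x).const_mul ((3/4 : ℝ) * Real.sqrt (N : ℝ) ^ 0)).mul (hb.mul hQ))).add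
    (((hasDerivAt_pow 0 x).const_mul ((-1 : ℝ) * Real.sqrt (N : ℝ) ^ 2)).mul (hb.mul hQ))).add
    (((hasDerivAt_pow 0 x).const_mul ((1 : ℝ) * Real.sqrt (N : ℝ) ^ 4)).mul (hb.mul hQ))).add
    (((hasDerivAt_pow 2 x).const_mul ((3/4 : ℝ) * Real.sqrt (N : ℝ) ^ 0)).mul (hb.mul hQ))).add
    (((hasDerivAt_pow 2 x).const_mul ((-1/2 : ℝ) * Real.sqrt (N : ℝ) ^ 2)).mul (hb.mul hQ))).add
    (((hasDerivAt_pow 4 x).const_mul ((1/16 : ℝ) * Real.sqrt (N : ℝ) ^ 0)).mul (hb.mul hQ))).add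
    (((hasDerivAt_pow 0 x).const_mul ((1/4 : ℝ) * Real.sqrt (N : ℝ) ^ 1)).mul (hb.mul hb))).add
    (((hasDerivAt_pow 0 x).const_mul ((1/2 : ℝ) * Real.sqrt (N : ℝ) ^ 3)).mul (hb.mul hb))).add
    (((hasDerivAt_pow 2 x).const_mul ((-1/8 : ℝ) * Real.sqrt (N : ℝ) ^ 1)).mul (hb.mul hb))).const_mul (Real.sqrt (N : ℝ))
  have hfun : g4 N = fun x => Real.sqrt (N : ℝ) *
    (((-1 : ℝ) * Real.sqrt (N : ℝ) ^ 1) * x ^ 1 * (aF N x * QF N x) + ((-1 : ℝ) * Real.sqrt (N : ℝ) ^ 1) * x ^ 0 * (aF N x * aF N x) + ((5/8 : ℝ) * Real.sqrt (N : ℝ) ^ 0) * x ^ 1 * (aF N x * bF N x) + ((-1/4 : ℝ) * Real.sqrt (N : ℝ) ^ 2) * x ^ 1 * (aF N x * bF N x) + ((1/16 : ℝ) * Real.sqrt (N : ℝ) ^ 0) * x ^ 3 * (aF N x * bF N x) + ((3/4 : ℝ) * Real.sqrt (N : ℝ) ^ 0) * x ^ 0 * (bF N x * QF N x) + ((-1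 : ℝ) * Real.sqrt (N : ℝ) ^ 2) * x ^ 0 * (bF N x * QF N x) + ((1 : ℝ) * Real.sqrt (N : ℝ) ^ 4) * x ^ 0 * (bF N x * QF N x) + ((3/4 : ℝ) * Real.sqrt (N : ℝ) ^ 0) * x ^ 2 * (bF N x * QF N x) + ((-1/2 : ℝ) * Real.sqrt (N : ℝ) ^ 2) * x ^ 2 * (bF N x * QF N x) + ((1/16 : ℝ) * Real.sqrt (N : ℝ) ^ 0) * x ^ 4 * (bF N x * QF N x) + ((1/4 : ℝ) * Real.sqrt (N : ℝ) ^ 1) * x ^ 0 * (bF N x * bF N x) + ((1/2 : ℝ) * Real.sqrt (N : ℝ) ^ 3) * x ^ 0 * (bF N x * bF N x) + ((-1/8 : ℝ) * Real.sqrt (N : ℝ) ^ 1) * x ^ 2 * (bF N x * bF N x)) := rfl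
  rw [hfun]
  refine H.congr_deriv ?_
  simp only [g5, Pi.mul_apply]
  push_cast
  ring

end GOE

namespace GOE

theorem goeDensity_eq {N : ℕ} (hN : 2 ≤ N) : goeDensity N = g0 N := by
  funext x
  simp only [goeDensity]
  rw [(hasDerivAt_pOrtho_top hN x).deriv, (hasDerivAt_pOrtho_bot hN x).deriv]
  have hexp : Real.exp (-x ^ 2 / 2) = Real.exp (-x ^ 2 / 4) * Real.exp (-x ^ 2 / 4) := by
    rw [← Real.exp_add]; ring_nf
  rw [hexp]
  simp only [g0, aF, bF, QF]
  ring

end GOE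

/-- The unscaled GOE eigenvalue density satisfies the fifth order linear ODE
`−4ρ⁽⁵⁾ + 5(x²−4N+2)ρ''' − 6xρ'' + (−x⁴+(8N−4)x²−16N²+16N+2)ρ' + x(x²−4N+2)ρ = 0`. -/
theorem goeDensity_ode (N : ℕ) (hN : 2 ≤ N) (x : ℝ) :
    -4 * iteratedDeriv 5 (goeDensity N) x +
        5 * (x ^ 2 - 4 * (N : ℝ) + 2) * iteratedDeriv 3 (goeDensity N) x -
        6 * x * iteratedDeriv 2 (goeDensity N) x +
        (-x ^ 4 + (8 * (N : ℝ) - 4) * x ^ 2 - 16 * (N : ℝ) ^ 2 + 16 * (N : ℝ) + 2) *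
          deriv (goeDensity N) x +
        x * (x ^ 2 - 4 * (N : ℝ) + 2) * goeDensity N x = 0 := by
  have e0 : goeDensity N = GOE.g0 N := GOE.goeDensity_eq hN
  have e1 : deriv (goeDensity N) = GOE.g1 N := by
    rw [e0]; exact funext fun y => (GOE.gstep0 hN y).deriv
  have e2 : iteratedDeriv 2 (goeDensity N) = GOE.g2 N := by
    rw [show (2:ℕ) = 1 + 1 from rfl, iteratedDeriv_succ, iteratedDeriv_one, e1]
    exact funext fun y => (GOE.gstep1 hN y).deriv
  have e3 : iteratedDeriv 3 (goeDensity N) = GOE.g3 N := by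
    rw [show (3:ℕ) = 2 + 1 from rfl, iteratedDeriv_succ, e2]
    exact funext fun y => (GOE.gstep2 hN y).deriv
  have e4 : iteratedDeriv 4 (goeDensity N) = GOE.g4 N := by
    rw [show (4:ℕ) = 3 + 1 from rfl, iteratedDeriv_succ, e3]
    exact funext fun y => (GOE.gstep3 hN y).deriv
  have e5 : iteratedDeriv 5 (goeDensity N) = GOE.g5 N := by
    rw [show (5:ℕ) = 4 + 1 from rfl, iteratedDeriv_succ, e4]
    exact funext fun y => (GOE.gstep4 hN y).deriv
  rw [e5, e3, e2, e1, e0]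
  simp only [GOE.g0, GOE.g1, GOE.g2, GOE.g3, GOE.g5]
  set s := Real.sqrt (N : ℝ) with hsdef
  have hs : s ^ 2 = (N : ℝ) := Real.sq_sqrt (by positivity)
  rw [← hs]
  ring
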